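/- arXiv:2007.10874 — 2 statements merged into one kernel-verified Lean document; each statement's English description precedes it below -/
import Mathlib

section
/- Let (xi_k)_{k in Z} be a sequence of independent random variables with P(xi_k = 1) = P(xi_k = 0) = 1/2 for all k, and define the stationary process X_t = sum_{j=0}^infinity 2^{-j-1} xi_{t-j} for t in Z. Then X is theta-lex weakly dependent; in fact its theta-lex coefficients satisfy theta(h) <= 2^{-h} for all h in N, so theta(h) -> 0 as h -> infinity. -/
open MeasureTheory Filter Topology ProbabilityTheory

set_option maxHeartbeats 1000000

noncomputable section

/-- Covariance of two real-valued random variables. -/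
def cov {Ω : Type*} [MeasurableSpace Ω] (P : Measure Ω) (f g : Ω → ℝ) : ℝ :=
  (∫ ω, f ω * g ω ∂P) - (∫ ω, f ω ∂P) * (∫ ω, g ω ∂P)

/-- The set `V_j^h = {s : s ≤ j and |j - s| ≥ h}` for the natural order on `ℤ`. -/
def VSet (j : ℤ) (h : ℝ) : Set ℤ :=
  {s | s ≤ j ∧ h ≤ |((j - s : ℤ) : ℝ)|}

/-- `θ : ℝ → ℝ` is a family of θ-lex coefficients for the process `X`. -/
def HasThetaLexBound {Ω : Type*} [MeasurableSpace Ω] (P : Measure Ω)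
    (X : ℤ → Ω → ℝ) (θ : ℝ → ℝ) : Prop :=
  ∀ (h : ℝ), 0 < h → ∀ (u : ℕ) (j : ℤ) (Γ : Fin u → ℤ),
    Function.Injective Γ → (∀ i, Γ i ∈ VSet j h) →
    ∀ (F : (Fin u → ℝ) → ℝ) (G : ℝ → ℝ) (MF LG : ℝ),
      Measurable F → (∀ x, |F x| ≤ MF) →
      Measurable G → (∃ MG, ∀ x, |G x| ≤ MG) →
      (∀ x y, |G x - G y| ≤ LG * |x - y|) →
      |cov P (fun ω => F (fun i => X (Γ i) ω)) (fun ω => G (X j ω))| ≤ θ h * MF * LG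

lemma crw (k : ℕ) : (2 : ℝ) ^ (-(k : ℝ) - 1) = (2⁻¹ : ℝ) ^ k * 2⁻¹ := by
  have h1 : (-(k : ℝ) - 1) = -(((k + 1 : ℕ) : ℝ)) := by push_cast; ring
  rw [h1, Real.rpow_neg (by norm_num), Real.rpow_natCast, ← inv_pow, pow_succ]

lemma crw' (h : ℕ) : (2 : ℝ) ^ (-(h : ℝ)) = (2⁻¹ : ℝ) ^ h := by
  rw [Real.rpow_neg (by norm_num : (0:ℝ) ≤ 2), Real.rpow_natCast, ← inv_pow]

lemma indepFun_of_biSup {Ω : Type*} [m0 : MeasurableSpace Ω] {P : Measure Ω}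
    (ξ : ℤ → Ω → ℝ) (hmeas : ∀ k, Measurable (ξ k))
    (hindep : iIndepFun ξ P)
    (A : Set ℤ) (f g : Ω → ℝ)
    (hf : Measurable[⨆ s ∈ A, MeasurableSpace.comap (ξ s) inferInstance] f)
    (hg : Measurable[⨆ s ∈ Aᶜ, MeasurableSpace.comap (ξ s) inferInstance] g) :
    IndepFun f g P := by
  rw [IndepFun_iff_Indep]
  exact indep_of_indep_of_le_left
    (indep_of_indep_of_le_right
      (indep_biSup_compl (fun k => (hmeas k).comap_le) hindep.iIndep A)
      (measurable_iff_comap_le.mp hg))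
    (measurable_iff_comap_le.mp hf)

theorem main_bound {Ω : Type*} [MeasurableSpace Ω] (P : Measure Ω) [IsProbabilityMeasure P]
    (ξ : ℤ → Ω → ℝ) (hmeas : ∀ k, Measurable (ξ k))
    (hindep : iIndepFun ξ P)
    (hber : ∀ k, P {ω | ξ k ω = 1} = 1 / 2 ∧ P {ω | ξ k ω = 0} = 1 / 2)
    (X : ℤ → Ω → ℝ)
    (hX : ∀ t ω, X t ω = ∑' j : ℕ, (2 : ℝ) ^ (-(j : ℝ) - 1) * ξ (t - j) ω)
    (h : ℕ) (hh : 1 ≤ h) (u : ℕ) (j : ℤ) (Γ : Fin u → ℤ)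
    (hΓmem : ∀ i, Γ i ∈ VSet j (h : ℝ))
    (F : (Fin u → ℝ) → ℝ) (G : ℝ → ℝ) (MF LG : ℝ)
    (hFm : Measurable F) (hFb : ∀ x, |F x| ≤ MF)
    (hGm : Measurable G) (hGb : ∃ MG, ∀ x, |G x| ≤ MG)
    (hLip : ∀ x y, |G x - G y| ≤ LG * |x - y|) :
    |cov P (fun ω => F (fun i => X (Γ i) ω)) (fun ω => G (X j ω))| ≤
      (2 : ℝ) ^ (-(h : ℝ)) * MF * LG := by
  obtain ⟨MG, hGbd⟩ := hGb
  set r : ℝ := 2⁻¹ with hr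
  have hr0 : (0:ℝ) ≤ r := by norm_num [hr]
  have hr1 : r < 1 := by norm_num [hr]
  set c : ℕ → ℝ := fun k => r ^ k * r with hc
  have hc0 : ∀ k, 0 ≤ c k := fun k => mul_nonneg (pow_nonneg hr0 _) hr0
  have hcsum : Summable c := (summable_geometric_of_lt_one hr0 hr1).mul_right r
  -- the {0,1}-valued modification of ξ
  set ξ' : ℤ → Ω → ℝ := fun k => ({ω | ξ k ω = 1}).indicator (fun _ => (1:ℝ)) with hξ'
  have hsmeas : ∀ k : ℤ, MeasurableSet {ω | ξ k ω = 1} := fun k =>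
    (hmeas k) (measurableSet_singleton 1)
  have hξ'm : ∀ k, Measurable (ξ' k) := fun k => (measurable_const.indicator (hsmeas k))
  have hξ'01 : ∀ k ω, ξ' k ω = 0 ∨ ξ' k ω = 1 := by
    intro k ω
    by_cases hω : ξ k ω = 1
    · right; simp [hξ', Set.indicator_of_mem, hω]
    · left; simp [hξ', Set.indicator_of_notMem, hω]
  have hξ'0 : ∀ k ω, 0 ≤ ξ' k ω := by
    intro k ω; rcases hξ'01 k ω with h0 | h0 <;> simp [h0]
  have hξ'1 : ∀ k ω, ξ' k ω ≤ 1 := by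
    intro k ω; rcases hξ'01 k ω with h0 | h0 <;> simp [h0]
  -- ξ' = ξ a.e.
  have hξ'ae : ∀ k : ℤ, ∀ᵐ ω ∂P, ξ' k ω = ξ k ω := by
    intro k
    have hdisj : Disjoint {ω | ξ k ω = 1} {ω | ξ k ω = 0} := by
      rw [Set.disjoint_left]; intro ω h1 h0
      simp only [Set.mem_setOf_eq] at h1 h0; rw [h1] at h0; norm_num at h0
    have hunion : P ({ω | ξ k ω = 1} ∪ {ω | ξ k ω = 0}) = 1 := by
      rw [measure_union hdisj
          (show MeasurableSet {ω | ξ k ω = 0} from (hmeas k) (measurableSet_singleton 0)),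
        (hber k).1, (hber k).2]
      rw [show (1:ENNReal)/2 = 2⁻¹ from one_div 2]
      exact ENNReal.inv_two_add_inv_two
    have hcompl : P ({ω | ξ k ω = 1} ∪ {ω | ξ k ω = 0})ᶜ = 0 := by
      rw [measure_compl ((hsmeas k).union
          (show MeasurableSet {ω | ξ k ω = 0} from (hmeas k) (measurableSet_singleton 0)))
        (measure_ne_top _ _), hunion, measure_univ, tsub_self]
    rw [ae_iff]
    refine measure_mono_null ?_ hcompl
    intro ω hω
    simp only [Set.mem_setOf_eq] at hω
    simp only [Set.compl_union, Set.mem_inter_iff, Set.mem_compl_iff, Set.mem_setOf_eq]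
    constructor
    · intro h1; exact hω (by simp [hξ', Set.indicator_of_mem, h1])
    · intro h0; apply hω
      have : ξ k ω ≠ 1 := by rw [h0]; norm_num
      simp [hξ', Set.indicator_of_notMem, this, h0]
  have hEae : ∀ᵐ ω ∂P, ∀ k : ℤ, ξ' k ω = ξ k ω := ae_all_iff.2 hξ'ae
  -- pointwise summability
  have hsum : ∀ (t : ℤ) ω, Summable (fun k : ℕ => c k * ξ' (t - k) ω) := by
    intro t ω
    refine Summable.of_nonneg_of_le (fun k => mul_nonneg (hc0 k) (hξ'0 _ ω))
      (fun k => ?_) hcsum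
    calc c k * ξ' (t - k) ω ≤ c k * 1 :=
        mul_le_mul_of_nonneg_left (hξ'1 _ ω) (hc0 k)
      _ = c k := mul_one _
  set X' : ℤ → Ω → ℝ := fun t ω => ∑' k : ℕ, c k * ξ' (t - k) ω with hX'
  -- X' = X a.e. (simultaneously for all t)
  have hXX' : ∀ᵐ ω ∂P, ∀ t : ℤ, X' t ω = X t ω := by
    filter_upwards [hEae] with ω hω
    intro t
    rw [hX]
    exact tsum_congr fun k => by rw [crw, hω (t - k)]
  -- measurability of X' with respect to a sub-σ-algebra
  have hX'meas : ∀ (m : MeasurableSpace Ω) (t : ℤ),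
      (∀ k : ℕ, Measurable[m] (ξ' (t - k))) → Measurable[m] (X' t) := by
    intro m t hm
    have htend : ∀ ω, Tendsto (fun n => ∑ k ∈ Finset.range n, c k * ξ' (t - k) ω)
        atTop (𝓝 (X' t ω)) := fun ω => (hsum t ω).hasSum.tendsto_sum_nat
    exact measurable_of_tendsto_metrizable
      (fun n => Finset.measurable_sum _ fun k _ => ((hm k).const_mul _))
      (tendsto_pi_nhds.2 htend)
  have hX'amb : ∀ t, Measurable (X' t) := fun t =>
    hX'meas _ t fun k => hξ'm _
  -- the two σ-algebras
  set A : Set ℤ := {s | s ≤ j - h} with hA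
  have hξ'comap : ∀ k : ℤ, MeasurableSpace.comap (ξ' k) inferInstance ≤
      MeasurableSpace.comap (ξ k) inferInstance := by
    intro k
    have hφ : Measurable (fun x : ℝ => if x = 1 then (1:ℝ) else 0) :=
      Measurable.ite (measurableSet_eq) measurable_const measurable_const
    have hcomp : ξ' k = (fun x : ℝ => if x = 1 then (1:ℝ) else 0) ∘ ξ k := by
      funext ω; simp [hξ', Set.indicator_apply]
    rw [hcomp, ← MeasurableSpace.comap_comp]
    exact MeasurableSpace.comap_mono hφ.comap_le
  have hξ'le : ∀ (s : Set ℤ) (k : ℤ), k ∈ s →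
      Measurable[⨆ i ∈ s, MeasurableSpace.comap (ξ i) inferInstance] (ξ' k) := by
    intro s k hk
    rw [measurable_iff_comap_le]
    exact (hξ'comap k).trans
      (le_biSup (f := fun i => MeasurableSpace.comap (ξ i) inferInstance) hk)
  -- Γ indices lie in A
  have hΓA : ∀ i, Γ i ≤ j - h := by
    intro i
    obtain ⟨hle, habs⟩ := hΓmem i
    have h0 : (0:ℤ) ≤ j - Γ i := sub_nonneg.2 hle
    rw [abs_of_nonneg (by exact_mod_cast h0)] at habs
    have : (h:ℤ) ≤ j - Γ i := by exact_mod_cast habs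
    omega
  -- f' is mA-measurable
  set f' : Ω → ℝ := fun ω => F (fun i => X' (Γ i) ω) with hf'
  have hf'mA : Measurable[⨆ s ∈ A, MeasurableSpace.comap (ξ s) inferInstance] f' := by
    have hXi : ∀ i : Fin u,
        Measurable[⨆ s ∈ A, MeasurableSpace.comap (ξ s) inferInstance] (fun ω => X' (Γ i) ω) := by
      intro i
      refine hX'meas _ (Γ i) fun k => hξ'le A _ ?_
      simp only [hA, Set.mem_setOf_eq]
      have := hΓA i
      omega
    exact hFm.comp (@measurable_pi_lambda Ω (Fin u) (fun _ => ℝ)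
      (⨆ s ∈ A, MeasurableSpace.comap (ξ s) inferInstance) (fun _ => inferInstance)
      (fun ω i => X' (Γ i) ω) hXi)
  have hf'amb : Measurable f' :=
    hf'mA.mono (iSup_le fun s => iSup_le fun _ => (hmeas s).comap_le) le_rfl
  -- Y' and g''
  set Y' : Ω → ℝ := fun ω => ∑ k ∈ Finset.range h, c k * ξ' (j - k) ω with hY'
  have hY'mB : Measurable[⨆ s ∈ Aᶜ, MeasurableSpace.comap (ξ s) inferInstance] Y' := by
    refine Finset.measurable_sum _ fun k hk => Measurable.const_mul ?_ _
    refine hξ'le Aᶜ _ ?_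
    simp only [hA, Set.mem_compl_iff, Set.mem_setOf_eq, not_le]
    have hk' : (k:ℤ) < h := by exact_mod_cast Finset.mem_range.mp hk
    omega
  set g' : Ω → ℝ := fun ω => G (X' j ω) with hg'
  set g'' : Ω → ℝ := fun ω => G (Y' ω + c h) with hg''
  have hg''mB : Measurable[⨆ s ∈ Aᶜ, MeasurableSpace.comap (ξ s) inferInstance] g'' :=
    hGm.comp (hY'mB.add_const _)
  have hg''amb : Measurable g'' := hg''mB.mono
    (iSup_le fun s => iSup_le fun _ => (hmeas s).comap_le) le_rfl
  have hg'amb : Measurable g' := hGm.comp (hX'amb j)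
  -- independence of f' and g''
  have hIndepfg : IndepFun f' g'' P :=
    indepFun_of_biSup ξ hmeas hindep A f' g'' hf'mA hg''mB
  -- tail decomposition and bounds
  have htail_sum : ∑' k : ℕ, c (k + h) = 2 * c h := by
    have h1 : ∀ k : ℕ, c (k + h) = r ^ k * c h := by
      intro k; simp only [hc, pow_add]; ring
    rw [tsum_congr h1, tsum_mul_right, tsum_geometric_of_lt_one hr0 hr1]
    norm_num [hr]
  have htail : ∀ ω, X' j ω = Y' ω + ∑' k : ℕ, c (k + h) * ξ' (j - ((k + h : ℕ) : ℤ)) ω := by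
    intro ω
    have := Summable.sum_add_tsum_nat_add (f := fun k : ℕ => c k * ξ' (j - k) ω) h (hsum j ω)
    simp only [hX', hY']
    rw [← this]
  have htail0 : ∀ ω, 0 ≤ ∑' k : ℕ, c (k + h) * ξ' (j - ((k + h : ℕ) : ℤ)) ω := by
    intro ω
    exact tsum_nonneg fun k => mul_nonneg (hc0 _) (hξ'0 _ ω)
  have htail2 : ∀ ω, ∑' k : ℕ, c (k + h) * ξ' (j - ((k + h : ℕ) : ℤ)) ω ≤ 2 * c h := by
    intro ω
    rw [← htail_sum]
    refine Summable.tsum_le_tsum (fun k => ?_) ?_ ?_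
    · calc c (k+h) * ξ' (j - ((k + h : ℕ) : ℤ)) ω ≤ c (k+h) * 1 :=
          mul_le_mul_of_nonneg_left (hξ'1 _ ω) (hc0 _)
        _ = c (k+h) := mul_one _
    · exact (summable_nat_add_iff h).2 (hsum j ω)
    · exact (summable_nat_add_iff h).2 hcsum
  -- pointwise difference bound
  have hLG0 : 0 ≤ LG := by
    have h1 := hLip 0 1
    have h2 : (0:ℝ) ≤ |G 0 - G 1| := abs_nonneg _
    simp only [zero_sub, abs_neg, abs_one, mul_one] at h1
    linarith
  have hMF0 : 0 ≤ MF := (abs_nonneg _).trans (hFb (fun _ => 0))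
  have hdiff : ∀ ω, |g' ω - g'' ω| ≤ LG * c h := by
    intro ω
    calc |g' ω - g'' ω| ≤ LG * |X' j ω - (Y' ω + c h)| := hLip _ _
      _ ≤ LG * c h := by
          refine mul_le_mul_of_nonneg_left ?_ hLG0
          rw [abs_le]
          have h1 := htail0 ω
          have h2 := htail2 ω
          have h3 := htail ω
          constructor <;> nlinarith [hc0 h]
  -- integrability
  have hint : ∀ (f : Ω → ℝ) (C : ℝ), Measurable f → (∀ ω, |f ω| ≤ C) → Integrable f P := by
    intro f C hf hC
    exact ⟨hf.aestronglyMeasurable,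
      HasFiniteIntegral.of_bounded (C := C) (ae_of_all _ fun ω => by
        rw [Real.norm_eq_abs]; exact hC ω)⟩
  have hintf' : Integrable f' P := hint f' MF hf'amb fun ω => hFb _
  have hintg' : Integrable g' P := hint g' MG hg'amb fun ω => hGbd _
  have hintg'' : Integrable g'' P := hint g'' MG hg''amb fun ω => hGbd _
  have hintf'g' : Integrable (fun ω => f' ω * g' ω) P :=
    hint _ (MF * MG) (hf'amb.mul hg'amb) fun ω => by
      rw [abs_mul]
      exact mul_le_mul (hFb _) (hGbd _) (abs_nonneg _) hMF0
  have hintf'g'' : Integrable (fun ω => f' ω * g'' ω) P :=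
    hint _ (MF * MG) (hf'amb.mul hg''amb) fun ω => by
      rw [abs_mul]
      exact mul_le_mul (hFb _) (hGbd _) (abs_nonneg _) hMF0
  -- independence kills the g'' part
  have hmul : ∫ ω, f' ω * g'' ω ∂P = (∫ ω, f' ω ∂P) * ∫ ω, g'' ω ∂P :=
    hIndepfg.integral_mul_eq_mul_integral hintf'.aestronglyMeasurable hintg''.aestronglyMeasurable
  -- key identity
  have key : cov P f' g' = (∫ ω, f' ω * (g' ω - g'' ω) ∂P) -
      (∫ ω, f' ω ∂P) * (∫ ω, (g' ω - g'' ω) ∂P) := by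
    have e1 : ∫ ω, f' ω * (g' ω - g'' ω) ∂P =
        (∫ ω, f' ω * g' ω ∂P) - ∫ ω, f' ω * g'' ω ∂P := by
      simp_rw [mul_sub]
      exact integral_sub hintf'g' hintf'g''
    have e2 : ∫ ω, (g' ω - g'' ω) ∂P = (∫ ω, g' ω ∂P) - ∫ ω, g'' ω ∂P :=
      integral_sub hintg' hintg''
    simp only [cov]
    rw [e1, e2, hmul]
    ring
  -- replace X by X'
  have hcovcongr : cov P (fun ω => F (fun i => X (Γ i) ω)) (fun ω => G (X j ω)) =
      cov P f' g' := by
    have a1 : (fun ω => F (fun i => X (Γ i) ω)) =ᵐ[P] f' := by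
      filter_upwards [hXX'] with ω hω
      simp only [hf']
      congr 1
      funext i
      rw [hω]
    have a2 : (fun ω => G (X j ω)) =ᵐ[P] g' := by
      filter_upwards [hXX'] with ω hω
      simp only [hg', hω]
    have a3 : (fun ω => F (fun i => X (Γ i) ω) * G (X j ω)) =ᵐ[P]
        (fun ω => f' ω * g' ω) := by
      filter_upwards [a1, a2] with ω h1 h2
      simp only [h1, h2]
    simp only [cov]
    rw [integral_congr_ae a1, integral_congr_ae a2, integral_congr_ae a3]
  -- final estimate
  rw [hcovcongr, key]
  have b1 : |∫ ω, f' ω * (g' ω - g'' ω) ∂P| ≤ MF * (LG * c h) := by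
    have := norm_integral_le_of_norm_le_const (μ := P)
      (f := fun ω => f' ω * (g' ω - g'' ω)) (C := MF * (LG * c h))
      (ae_of_all _ fun ω => by
        rw [Real.norm_eq_abs, abs_mul]
        exact mul_le_mul (hFb _) (hdiff ω) (abs_nonneg _) hMF0)
    simpa [Real.norm_eq_abs, measure_univ] using this
  have b2 : |∫ ω, f' ω ∂P| ≤ MF := by
    have := norm_integral_le_of_norm_le_const (μ := P) (f := f') (C := MF)
      (ae_of_all _ fun ω => by rw [Real.norm_eq_abs]; exact hFb _)
    simpa [Real.norm_eq_abs, measure_univ] using this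
  have b3 : |∫ ω, (g' ω - g'' ω) ∂P| ≤ LG * c h := by
    have := norm_integral_le_of_norm_le_const (μ := P)
      (f := fun ω => g' ω - g'' ω) (C := LG * c h)
      (ae_of_all _ fun ω => by rw [Real.norm_eq_abs]; exact hdiff ω)
    simpa [Real.norm_eq_abs, measure_univ] using this
  have hch : c h = (2:ℝ)^(-(h:ℝ)) * 2⁻¹ := by
    rw [crw']
  calc |(∫ ω, f' ω * (g' ω - g'' ω) ∂P) -
      (∫ ω, f' ω ∂P) * (∫ ω, (g' ω - g'' ω) ∂P)|
      ≤ |∫ ω, f' ω * (g' ω - g'' ω) ∂P| +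
        |(∫ ω, f' ω ∂P) * (∫ ω, (g' ω - g'' ω) ∂P)| := abs_sub _ _
    _ ≤ MF * (LG * c h) + MF * (LG * c h) := by
        refine add_le_add b1 ?_
        rw [abs_mul]
        exact mul_le_mul b2 b3 (abs_nonneg _) hMF0
    _ = (2:ℝ)^(-(h:ℝ)) * MF * LG := by rw [hch]; ring

/-- Proposition 2.9, positive part: the stationary process
`X_t = ∑_{j≥0} 2^{-j-1} ξ_{t-j}`, with `(ξ_k)` i.i.d. Bernoulli(1/2), is θ-lex weakly
dependent, with θ-lex coefficients bounded by `2^{-h}`. -/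
theorem bernoulli_ma_thetaLexWeaklyDependent
    {Ω : Type*} [MeasurableSpace Ω] (P : Measure Ω) [IsProbabilityMeasure P]
    (ξ : ℤ → Ω → ℝ) (hmeas : ∀ k, Measurable (ξ k))
    (hindep : iIndepFun ξ P)
    (hber : ∀ k, P {ω | ξ k ω = 1} = 1 / 2 ∧ P {ω | ξ k ω = 0} = 1 / 2)
    (X : ℤ → Ω → ℝ)
    (hX : ∀ t ω, X t ω = ∑' j : ℕ, (2 : ℝ) ^ (-(j : ℝ) - 1) * ξ (t - j) ω) :
    (∀ h : ℕ, 1 ≤ h →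
      ∀ (u : ℕ) (j : ℤ) (Γ : Fin u → ℤ),
        Function.Injective Γ → (∀ i, Γ i ∈ VSet j (h : ℝ)) →
        ∀ (F : (Fin u → ℝ) → ℝ) (G : ℝ → ℝ) (MF LG : ℝ),
          Measurable F → (∀ x, |F x| ≤ MF) →
          Measurable G → (∃ MG, ∀ x, |G x| ≤ MG) →
          (∀ x y, |G x - G y| ≤ LG * |x - y|) →
          |cov P (fun ω => F (fun i => X (Γ i) ω)) (fun ω => G (X j ω))| ≤
            (2 : ℝ) ^ (-(h : ℝ)) * MF * LG) ∧
    ∃ θ : ℝ → ℝ, Tendsto θ atTop (𝓝 0) ∧ HasThetaLexBound P X θ := by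
  have hmain : ∀ h : ℕ, 1 ≤ h →
      ∀ (u : ℕ) (j : ℤ) (Γ : Fin u → ℤ),
        Function.Injective Γ → (∀ i, Γ i ∈ VSet j (h : ℝ)) →
        ∀ (F : (Fin u → ℝ) → ℝ) (G : ℝ → ℝ) (MF LG : ℝ),
          Measurable F → (∀ x, |F x| ≤ MF) →
          Measurable G → (∃ MG, ∀ x, |G x| ≤ MG) →
          (∀ x y, |G x - G y| ≤ LG * |x - y|) →
          |cov P (fun ω => F (fun i => X (Γ i) ω)) (fun ω => G (X j ω))| ≤
            (2 : ℝ) ^ (-(h : ℝ)) * MF * LG := by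
    intro h hh u j Γ _ hΓmem F G MF LG hFm hFb hGm hGb hLip
    exact main_bound P ξ hmeas hindep hber X hX h hh u j Γ hΓmem F G MF LG
      hFm hFb hGm hGb hLip
  refine ⟨hmain, ⟨fun x => (2:ℝ) ^ (-x), ?_, ?_⟩⟩
  · have heq : ∀ x : ℝ, (2:ℝ) ^ (-x) = (2⁻¹:ℝ) ^ x := by
      intro x
      rw [Real.rpow_neg (by norm_num : (0:ℝ) ≤ 2), ← Real.inv_rpow (by norm_num : (0:ℝ) ≤ 2)]
    simp only [heq]
    exact tendsto_rpow_atTop_of_base_lt_one _ (by norm_num) (by norm_num)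
  · intro h hh u j Γ hinj hΓmem F G MF LG hFm hFb hGm hGb hLip
    set n : ℕ := ⌈h⌉₊ with hn
    have hn1 : 1 ≤ n := Nat.one_le_iff_ne_zero.mpr (by
      simp only [hn, ne_eq, Nat.ceil_eq_zero, not_le]
      exact hh)
    have hΓmem' : ∀ i, Γ i ∈ VSet j (n : ℝ) := by
      intro i
      obtain ⟨hle, habs⟩ := hΓmem i
      refine ⟨hle, ?_⟩
      have h0 : (0:ℤ) ≤ j - Γ i := sub_nonneg.2 hle
      rw [abs_of_nonneg (by exact_mod_cast h0)] at habs ⊢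
      have hmn : ((j - Γ i).toNat : ℝ) = ((j - Γ i : ℤ) : ℝ) := by
        exact_mod_cast congrArg (fun z : ℤ => (z : ℝ)) (Int.toNat_of_nonneg h0)
      have : h ≤ ((j - Γ i).toNat : ℝ) := by rw [hmn]; exact habs
      have hcle : n ≤ (j - Γ i).toNat := Nat.ceil_le.mpr this
      rw [← hmn]
      exact_mod_cast hcle
    have hb := main_bound P ξ hmeas hindep hber X hX n hn1 u j Γ hΓmem' F G MF LG
      hFm hFb hGm hGb hLip
    refine hb.trans ?_
    have hLG0 : 0 ≤ LG := by
      have h1 := hLip 0 1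
      have h2 : (0:ℝ) ≤ |G 0 - G 1| := abs_nonneg _
      simp only [zero_sub, abs_neg, abs_one, mul_one] at h1
      linarith
    have hMF0 : 0 ≤ MF := (abs_nonneg _).trans (hFb (fun _ => 0))
    have hpow : (2:ℝ) ^ (-(n:ℝ)) ≤ (2:ℝ) ^ (-h) := by
      apply Real.rpow_le_rpow_of_exponent_le (by norm_num)
      have := Nat.le_ceil h
      simpa using this
    exact mul_le_mul_of_nonneg_right
      (mul_le_mul_of_nonneg_right hpow hMF0) hLG0


end
end

section
/- Let (xi_k)_{k in Z} be a sequence of independent random variables with P(xi_k = 1) = P(xi_k = 0) = 1/2 for all k, and define the stationary process X_t = sum_{j=0}^infinity 2^{-j-1} xi_{t-j} for t in Z. Then for every h >= 1 one has alpha(h) >= 1/4 and alpha_{infty,1}(h) >= 1/4; in particular X is neither alpha-mixing nor alpha_{infty,1}-mixing. (Indeed the event A = {X_0 <= 1/2} satisfies P(A) = 1/2, A belongs to sigma(X_s : s <= 0), and, up to a null set, A belongs to sigma(X_h) for every h >= 1, whence |P(A)P(A) - P(A intersect A)| = 1/4.) -/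
open MeasureTheory Filter Topology ProbabilityTheory
open scoped ENNReal

noncomputable section

/-- The σ-algebra generated by the random variables `X s`, `s ∈ S`. -/
def sigmaOn {Ω : Type*} [MeasurableSpace Ω] {I : Type*} (X : I → Ω → ℝ) (S : Set I) :
    MeasurableSpace Ω :=
  ⨆ s ∈ S, MeasurableSpace.comap (X s) inferInstance

/-- Rosenblatt's strong mixing coefficient of two sub-σ-algebras. -/
def alphaOf {Ω : Type*} [MeasurableSpace Ω] (P : Measure Ω)
    (M N : MeasurableSpace Ω) : ℝ :=
  sSup {r | ∃ A B : Set Ω, MeasurableSet[M] A ∧ MeasurableSet[N] B ∧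
    r = |(P A).toReal * (P B).toReal - (P (A ∩ B)).toReal|}

/-- The strong mixing coefficient `α(h) = α(σ(X_s : s ≤ 0), σ(X_s : s ≥ h))` of a process. -/
def alphaProcess {Ω : Type*} [MeasurableSpace Ω] (P : Measure Ω) (X : ℤ → Ω → ℝ)
    (h : ℝ) : ℝ :=
  alphaOf P (sigmaOn X {s : ℤ | s ≤ 0}) (sigmaOn X {s : ℤ | h ≤ (s : ℝ)})

/-- The strong mixing coefficient `α_{∞,1}(h)` of a process on `ℤ`. -/
def alphaInfOne {Ω : Type*} [MeasurableSpace Ω] (P : Measure Ω) (X : ℤ → Ω → ℝ)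
    (h : ℝ) : ℝ :=
  sSup {r | ∃ (Γ : Finset ℤ) (j : ℤ),
    (∀ i ∈ Γ, h ≤ |((i - j : ℤ) : ℝ)|) ∧
    r = alphaOf P (sigmaOn X (Γ : Set ℤ)) (sigmaOn X {j})}

/-! ### Auxiliary lemmas -/

lemma coeff_eq (i : ℕ) : (2:ℝ) ^ (-(i : ℝ) - 1) = (1/2) ^ (i+1) := by
  rw [show -(i:ℝ) - 1 = -(((i+1 : ℕ)) : ℝ) by push_cast; ring,
    Real.rpow_neg (by norm_num), Real.rpow_natCast]
  simp [one_div, inv_pow]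

lemma exists_int_sum {s : Finset ℕ} {f : ℕ → ℝ} (h : ∀ i ∈ s, ∃ z : ℤ, f i = z) :
    ∃ z : ℤ, ∑ i ∈ s, f i = z := by
  classical
  induction s using Finset.induction with
  | empty => exact ⟨0, by simp⟩
  | insert a s hni ih =>
    obtain ⟨z, hz⟩ := h a (Finset.mem_insert_self a s)
    obtain ⟨w, hw⟩ := ih fun i hi => h i (Finset.mem_insert_of_mem hi)
    exact ⟨z + w, by rw [Finset.sum_insert hni, hz, hw]; push_cast; ring⟩

lemma summable_half (t : ℤ) (x : ℤ → ℝ) (hx01 : ∀ k, x k = 0 ∨ x k = 1) :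
    Summable (fun i : ℕ => (1/2:ℝ)^(i+1) * x (t - i)) := by
  have hb : ∀ k, 0 ≤ x k ∧ x k ≤ 1 := fun k => by rcases hx01 k with h | h <;> simp [h]
  refine Summable.of_nonneg_of_le (fun i => ?_) (fun i => ?_)
    ((summable_geometric_two.mul_right (1/2:ℝ)).congr fun i => (pow_succ _ i).symm)
  · exact mul_nonneg (by positivity) (hb _).1
  · exact le_trans (mul_le_mul_of_nonneg_left (hb _).2 (by positivity)) (by rw [mul_one])

lemma tsum_half_sq : ∑' i : ℕ, (1/2:ℝ)^(i+2) = 1/2 := by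
  have : ∀ i : ℕ, (1/2:ℝ)^(i+2) = (1/2:ℝ)^i * (1/4) := by
    intro i; rw [pow_add]; norm_num
  rw [tsum_congr this, tsum_mul_right, tsum_geometric_two]; norm_num

/-- Deterministic digit-extraction lemma: if the `x k` all lie in `{0,1}` and
the left tail is not identically `1`, then for every `j` the `(j+1)`-st binary
digit of `X_j = ∑ 2^{-i-1} x_{j-i}` equals `x 0`. -/
lemma det_key (x : ℤ → ℝ) (hx01 : ∀ k, x k = 0 ∨ x k = 1)
    (hm : ∃ m : ℕ, x (-(m:ℤ)-1) = 0) (j : ℕ) :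
    (1/2 ≤ Int.fract ((2:ℝ)^j * ∑' i : ℕ, (1/2:ℝ)^(i+1) * x ((j:ℤ) - i)) ↔ x 0 = 1) := by
  have hb : ∀ k, 0 ≤ x k ∧ x k ≤ 1 := fun k => by rcases hx01 k with h | h <;> simp [h]
  have hs0 := summable_half 0 x hx01
  have hsplit : (1/2:ℝ) * x 0 + (∑' i : ℕ, (1/2:ℝ)^(i+2) * x (-(i:ℤ)-1))
      = ∑' i : ℕ, (1/2:ℝ)^(i+1) * x ((0:ℤ) - i) := by
    have h1 := Summable.sum_add_tsum_nat_add (f := fun i : ℕ => (1/2:ℝ)^(i+1) * x ((0:ℤ) - i)) 1 hs0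
    rw [← h1, Finset.sum_range_one]
    congr 1
    · norm_num
    · refine tsum_congr fun i => ?_
      show (1/2:ℝ)^(i+2) * x (-(i:ℤ)-1) = (1/2:ℝ)^(i+1+1) * x ((0:ℤ) - ((i+1:ℕ):ℤ))
      rw [show ((0:ℤ) - ((i+1:ℕ):ℤ)) = -(i:ℤ)-1 by push_cast; ring]
  set T := ∑' i : ℕ, (1/2:ℝ)^(i+2) * x (-(i:ℤ)-1) with hTdef
  have hT0 : 0 ≤ T := tsum_nonneg fun i => mul_nonneg (by positivity) (hb _).1
  have hg2 : Summable (fun i : ℕ => (1/2:ℝ)^(i+2)) :=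
    (summable_geometric_two.mul_right ((1/2:ℝ)^2)).congr fun i => (pow_add (1/2:ℝ) i 2).symm
  have hTlt : T < 1/2 := by
    obtain ⟨m, hm0⟩ := hm
    have hlt := Summable.tsum_lt_tsum_of_nonneg (i := m)
      (f := fun i : ℕ => (1/2:ℝ)^(i+2) * x (-(i:ℤ)-1)) (g := fun i : ℕ => (1/2:ℝ)^(i+2))
      (fun i => mul_nonneg (by positivity) (hb _).1)
      (fun i => le_trans (mul_le_mul_of_nonneg_left (hb _).2 (by positivity)) (by rw [mul_one]))
      (by show (1/2:ℝ)^(m+2) * x (-(m:ℤ)-1) < (1/2:ℝ)^(m+2)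
          rw [hm0, mul_zero]; positivity) hg2
    rwa [tsum_half_sq] at hlt
  have key : 0 ≤ (∑' i : ℕ, (1/2:ℝ)^(i+1) * x ((0:ℤ) - i))
      ∧ (∑' i : ℕ, (1/2:ℝ)^(i+1) * x ((0:ℤ) - i)) < 1
      ∧ (1/2 ≤ (∑' i : ℕ, (1/2:ℝ)^(i+1) * x ((0:ℤ) - i)) ↔ x 0 = 1) := by
    rcases hx01 0 with h0 | h0 <;> rw [← hsplit, h0] <;>
      refine ⟨by linarith, by linarith, ?_⟩
    · simp only [mul_zero, zero_add]
      exact ⟨fun h => by linarith, fun h => by norm_num at h⟩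
    · simp only [mul_one]
      exact ⟨fun _ => by trivial, fun _ => by linarith⟩
  have hsj := summable_half j x hx01
  have hsg : Summable (fun i : ℕ => (2:ℝ)^j * ((1/2:ℝ)^(i+1) * x ((j:ℤ) - i))) :=
    hsj.mul_left _
  have hD : ∃ z : ℤ, (2:ℝ)^j * (∑' i : ℕ, (1/2:ℝ)^(i+1) * x ((j:ℤ) - i))
      = z + ∑' i : ℕ, (1/2:ℝ)^(i+1) * x ((0:ℤ) - i) := by
    rw [← tsum_mul_left]
    have h1 := Summable.sum_add_tsum_nat_add
      (f := fun i : ℕ => (2:ℝ)^j * ((1/2:ℝ)^(i+1) * x ((j:ℤ) - i))) j hsg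
    rw [← h1]
    have htail : (∑' i : ℕ, (2:ℝ)^j * ((1/2:ℝ)^((i+j)+1) * x ((j:ℤ) - ((i+j:ℕ):ℤ))))
        = ∑' i : ℕ, (1/2:ℝ)^(i+1) * x ((0:ℤ) - i) := by
      refine tsum_congr fun i => ?_
      rw [show ((j:ℤ) - ((i+j:ℕ):ℤ)) = (0:ℤ)-(i:ℤ) by push_cast; ring,
        show (i+j)+1 = (i+1)+j by omega, pow_add, ← mul_assoc,
        mul_comm ((2:ℝ)^j), mul_assoc ((1/2:ℝ)^(i+1)), ← mul_pow]
      try norm_num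
    rw [htail]
    have hint : ∀ i ∈ Finset.range j, ∃ z : ℤ,
        (2:ℝ)^j * ((1/2:ℝ)^(i+1) * x ((j:ℤ) - i)) = z := by
      intro i hi
      have hij : i < j := Finset.mem_range.1 hi
      rcases hx01 ((j:ℤ) - i) with h0 | h0
      · exact ⟨0, by rw [h0]; simp⟩
      · refine ⟨2^(j-i-1), ?_⟩
        rw [h0, mul_one]
        push_cast
        conv_lhs => rw [show j = (j-i-1)+(i+1) by omega]
        rw [pow_add, mul_assoc, ← mul_pow]
        norm_num
    obtain ⟨z, hz⟩ := exists_int_sum hint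
    exact ⟨z, by rw [hz]⟩
  obtain ⟨z, hz⟩ := hD
  rw [hz, Int.fract_intCast_add, Int.fract_eq_self.2 ⟨key.1, key.2.1⟩]
  exact key.2.2

section Prob

variable {Ω : Type*} [mΩ : MeasurableSpace Ω]

lemma good_ae (P : Measure Ω) [IsProbabilityMeasure P]
    (ξ : ℤ → Ω → ℝ) (hmeas : ∀ k, Measurable (ξ k))
    (hindep : iIndepFun ξ P)
    (hber : ∀ k, P {ω | ξ k ω = 1} = 1 / 2 ∧ P {ω | ξ k ω = 0} = 1 / 2) :
    ∀ᵐ ω ∂P, (∀ k, ξ k ω = 0 ∨ ξ k ω = 1) ∧ ∃ m : ℕ, ξ (-(m:ℤ)-1) ω = 0 := by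
  have h01 : ∀ᵐ ω ∂P, ∀ k, ξ k ω = 0 ∨ ξ k ω = 1 := by
    rw [ae_all_iff]
    intro k
    have hdis : Disjoint {ω | ξ k ω = 0} {ω | ξ k ω = 1} := by
      rw [Set.disjoint_left]
      intro ω h0 h1
      simp only [Set.mem_setOf_eq] at h0 h1
      rw [h0] at h1; norm_num at h1
    have hm1 : MeasurableSet {ω | ξ k ω = 1} := (hmeas k) (measurableSet_singleton 1)
    have hm0 : MeasurableSet {ω | ξ k ω = 0} := (hmeas k) (measurableSet_singleton 0)
    have hU : P ({ω | ξ k ω = 0} ∪ {ω | ξ k ω = 1}) = 1 := by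
      rw [measure_union hdis hm1, (hber k).1, (hber k).2, ENNReal.add_halves]
    have := (prob_compl_eq_zero_iff (hm0.union hm1)).2 hU
    rw [ae_iff, show {a | ¬(ξ k a = 0 ∨ ξ k a = 1)}
      = ({ω | ξ k ω = 0} ∪ {ω | ξ k ω = 1})ᶜ by ext ω; simp [not_or]]
    exact this
  have hB1 : P {ω | (∀ k, ξ k ω = 0 ∨ ξ k ω = 1) ∧ ∀ m : ℕ, ξ (-(m:ℤ)-1) ω ≠ 0} = 0 := by
    set Bad := {ω | (∀ k, ξ k ω = 0 ∨ ξ k ω = 1) ∧ ∀ m : ℕ, ξ (-(m:ℤ)-1) ω ≠ 0}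
    have hle : ∀ n : ℕ, P Bad ≤ (1/2 : ℝ≥0∞)^n := by
      intro n
      set S : Finset ℤ := (Finset.range n).image (fun m : ℕ => -(m:ℤ)-1) with hS
      have hsub : Bad ⊆ ⋂ i ∈ S, ξ i ⁻¹' {1} := by
        intro ω hω
        simp only [Set.mem_iInter]
        intro i hi
        obtain ⟨m, _, rfl⟩ := Finset.mem_image.1 hi
        rcases hω.1 (-(m:ℤ)-1) with h | h
        · exact absurd h (hω.2 m)
        · exact h
      have hprod := hindep.meas_biInter (S := S) (s := fun i => ξ i ⁻¹' {1})
        (fun i _ => ⟨{1}, measurableSet_singleton 1, rfl⟩)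
      have heach : ∀ i ∈ S, P (ξ i ⁻¹' {1}) = 1/2 := fun i _ => (hber i).1
      calc P Bad ≤ P (⋂ i ∈ S, ξ i ⁻¹' {1}) := measure_mono hsub
        _ = ∏ i ∈ S, P (ξ i ⁻¹' {1}) := hprod
        _ = (1/2 : ℝ≥0∞)^S.card := by rw [Finset.prod_congr rfl heach, Finset.prod_const]
        _ = (1/2 : ℝ≥0∞)^n := by
            rw [Finset.card_image_of_injective _ (fun a b hab => by omega), Finset.card_range]
    have hlim : Tendsto (fun n : ℕ => (1/2 : ℝ≥0∞)^n) atTop (𝓝 0) :=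
      ENNReal.tendsto_pow_atTop_nhds_zero_of_lt_one (by norm_num)
    exact le_antisymm (ge_of_tendsto' hlim hle) zero_le
  filter_upwards [h01, (ae_iff (p := fun ω => ¬((∀ k, ξ k ω = 0 ∨ ξ k ω = 1) ∧
      ∀ m : ℕ, ξ (-(m:ℤ)-1) ω ≠ 0))).2 (by simpa using hB1)] with ω h1 h2
  refine ⟨h1, ?_⟩
  by_contra hc
  push_neg at hc
  exact h2 ⟨h1, hc⟩

lemma toReal_prob_le_one (P : Measure Ω) [IsProbabilityMeasure P] (A : Set Ω) :
    (P A).toReal ≤ 1 := by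
  have h := prob_le_one (μ := P) (s := A)
  simpa using ENNReal.toReal_mono (by norm_num) h

lemma abs_bound (P : Measure Ω) [IsProbabilityMeasure P] (A B : Set Ω) :
    |(P A).toReal * (P B).toReal - (P (A ∩ B)).toReal| ≤ 2 := by
  have h1 := toReal_prob_le_one P A
  have h2 := toReal_prob_le_one P B
  have h3 := toReal_prob_le_one P (A ∩ B)
  have n1 : (0:ℝ) ≤ (P A).toReal := ENNReal.toReal_nonneg
  have n2 : (0:ℝ) ≤ (P B).toReal := ENNReal.toReal_nonneg
  have n3 : (0:ℝ) ≤ (P (A ∩ B)).toReal := ENNReal.toReal_nonneg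
  rw [abs_le]
  constructor <;> nlinarith

lemma le_alphaOf (P : Measure Ω) [IsProbabilityMeasure P]
    {M N : MeasurableSpace Ω} {A B : Set Ω} (hA : MeasurableSet[M] A) (hB : MeasurableSet[N] B)
    (hval : (1:ℝ)/4 ≤ |(P A).toReal * (P B).toReal - (P (A ∩ B)).toReal|) :
    1/4 ≤ @alphaOf Ω mΩ P M N := by
  have hmem : |(P A).toReal * (P B).toReal - (P (A ∩ B)).toReal| ∈
      {r | ∃ A B : Set Ω, MeasurableSet[M] A ∧ MeasurableSet[N] B ∧
        r = |(P A).toReal * (P B).toReal - (P (A ∩ B)).toReal|} :=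
    ⟨A, B, hA, hB, rfl⟩
  have hbdd : BddAbove {r | ∃ A B : Set Ω, MeasurableSet[M] A ∧ MeasurableSet[N] B ∧
      r = |(P A).toReal * (P B).toReal - (P (A ∩ B)).toReal|} := by
    refine ⟨2, ?_⟩
    rintro r ⟨C, D, -, -, rfl⟩
    exact @abs_bound Ω mΩ P _ C D
  exact le_trans hval (le_csSup hbdd hmem)

lemma alphaOf_le_two (P : Measure Ω) [IsProbabilityMeasure P] (M N : MeasurableSpace Ω) :
    @alphaOf Ω mΩ P M N ≤ 2 := by
  have hmem : |(P (∅:Set Ω)).toReal * (P (∅:Set Ω)).toReal - (P ((∅:Set Ω) ∩ ∅)).toReal| ∈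
      {r | ∃ A B : Set Ω, MeasurableSet[M] A ∧ MeasurableSet[N] B ∧
        r = |(P A).toReal * (P B).toReal - (P (A ∩ B)).toReal|} :=
    ⟨∅, ∅, @MeasurableSet.empty _ M, @MeasurableSet.empty _ N, rfl⟩
  refine csSup_le ⟨_, hmem⟩ ?_
  rintro r ⟨C, D, -, -, rfl⟩
  exact @abs_bound Ω mΩ P _ C D

end Prob

/-- Proposition 2.9, negative part: the stationary process
`X_t = ∑_{j≥0} 2^{-j-1} ξ_{t-j}`, with `(ξ_k)` i.i.d. Bernoulli(1/2), satisfies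
`α(h) ≥ 1/4` and `α_{∞,1}(h) ≥ 1/4` for every `h ≥ 1`; in particular it is neither
α-mixing nor `α_{∞,1}`-mixing. -/
theorem bernoulli_ma_not_mixing
    {Ω : Type*} [MeasurableSpace Ω] (P : Measure Ω) [IsProbabilityMeasure P]
    (ξ : ℤ → Ω → ℝ) (hmeas : ∀ k, Measurable (ξ k))
    (hindep : iIndepFun ξ P)
    (hber : ∀ k, P {ω | ξ k ω = 1} = 1 / 2 ∧ P {ω | ξ k ω = 0} = 1 / 2)
    (X : ℤ → Ω → ℝ)
    (hX : ∀ t ω, X t ω = ∑' j : ℕ, (2 : ℝ) ^ (-(j : ℝ) - 1) * ξ (t - j) ω) :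
    (∀ h : ℝ, 1 ≤ h → 1 / 4 ≤ alphaProcess P X h ∧ 1 / 4 ≤ alphaInfOne P X h) ∧
    ¬ Tendsto (alphaProcess P X) atTop (𝓝 0) ∧
    ¬ Tendsto (alphaInfOne P X) atTop (𝓝 0) := by
  have hG := good_ae P ξ hmeas hindep hber
  set E := {ω | ξ 0 ω = 1} with hE
  have hPE : P E = 1/2 := (hber 0).1
  -- the test sets
  set A : ℕ → Set Ω := fun t => X (t:ℤ) ⁻¹' {y : ℝ | 1/2 ≤ Int.fract ((2:ℝ)^t * y)} with hA
  have hScomap : ∀ t : ℕ,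
      MeasurableSet[MeasurableSpace.comap (X (t:ℤ)) inferInstance] (A t) := by
    intro t
    exact ⟨{y : ℝ | 1/2 ≤ Int.fract ((2:ℝ)^t * y)},
      measurableSet_le measurable_const ((measurable_id.const_mul ((2:ℝ)^t)).fract), rfl⟩
  have hmem : ∀ t : ℕ, ∀ ω, ((∀ k, ξ k ω = 0 ∨ ξ k ω = 1) ∧ ∃ m : ℕ, ξ (-(m:ℤ)-1) ω = 0) →
      (ω ∈ A t ↔ ω ∈ E) := by
    intro t ω hω
    have hXval : X (t:ℤ) ω = ∑' i : ℕ, (1/2:ℝ)^(i+1) * ξ ((t:ℤ) - i) ω := by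
      rw [hX]; exact tsum_congr fun i => by rw [coeff_eq]
    have := det_key (fun k => ξ k ω) hω.1 hω.2 t
    simpa [hA, hE, Set.mem_preimage, Set.mem_setOf_eq, hXval] using this
  have hae : ∀ t : ℕ, A t =ᵐ[P] E := by
    intro t
    filter_upwards [hG] with ω hω
    exact eq_iff_iff.2 (hmem t ω hω)
  have hPA : ∀ t : ℕ, P (A t) = 1/2 := fun t => (measure_congr (hae t)).trans hPE
  have hPAB : ∀ s t : ℕ, P (A s ∩ A t) = 1/2 := by
    intro s t
    have h1 : (A s ∩ A t : Set Ω) =ᵐ[P] (E ∩ E : Set Ω) := (hae s).inter (hae t)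
    rw [Set.inter_self] at h1
    exact (measure_congr h1).trans hPE
  have htoReal : ((1:ℝ≥0∞)/2).toReal = 1/2 := by
    rw [ENNReal.toReal_div]; simp
  have hval : ∀ s t : ℕ,
      (1:ℝ)/4 ≤ |(P (A s)).toReal * (P (A t)).toReal - (P (A s ∩ A t)).toReal| := by
    intro s t
    rw [hPA, hPA, hPAB, htoReal]
    rw [show (1:ℝ)/2 * (1/2) - 1/2 = -(1/4) by norm_num, abs_neg, abs_of_nonneg (by norm_num)]
  have hsig : ∀ (S : Set ℤ) (t : ℤ), t ∈ S →
      MeasurableSpace.comap (X t) inferInstance ≤ sigmaOn X S := by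
    intro S t ht
    exact le_biSup (fun s => MeasurableSpace.comap (X s) inferInstance) ht
  have hmain : ∀ h : ℝ, 1 ≤ h → 1 / 4 ≤ alphaProcess P X h ∧ 1 / 4 ≤ alphaInfOne P X h := by
    intro h hh
    set n : ℕ := ⌈h⌉₊ with hn
    have hnh : h ≤ (n:ℝ) := Nat.le_ceil h
    constructor
    · refine le_alphaOf P ?_ ?_ (hval 0 n)
      · exact hsig {s : ℤ | s ≤ 0} ((0:ℕ):ℤ) (by simp) _ (hScomap 0)
      · refine hsig {s : ℤ | h ≤ (s:ℝ)} ((n:ℕ):ℤ) ?_ _ (hScomap n)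
        simp only [Set.mem_setOf_eq]
        push_cast
        exact hnh
    · have hmemset : alphaOf P (sigmaOn X (({0}: Finset ℤ) : Set ℤ)) (sigmaOn X {((n:ℕ):ℤ)})
          ∈ {r | ∃ (Γ : Finset ℤ) (j : ℤ),
            (∀ i ∈ Γ, h ≤ |((i - j : ℤ) : ℝ)|) ∧
            r = alphaOf P (sigmaOn X (Γ : Set ℤ)) (sigmaOn X {j})} := by
        refine ⟨{0}, ((n:ℕ):ℤ), ?_, rfl⟩
        intro i hi
        rw [Finset.mem_singleton] at hi
        subst hi
        rw [show ((((0:ℤ) - (n:ℤ) : ℤ)) : ℝ) = -(n:ℝ) by push_cast; ring, abs_neg,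
          abs_of_nonneg (by positivity)]
        exact hnh
      have h14 : (1:ℝ)/4 ≤ alphaOf P (sigmaOn X (({0}: Finset ℤ) : Set ℤ))
          (sigmaOn X {((n:ℕ):ℤ)}) := by
        refine le_alphaOf P ?_ ?_ (hval 0 n)
        · exact hsig (({0}: Finset ℤ) : Set ℤ) ((0:ℕ):ℤ) (by simp) _ (hScomap 0)
        · exact hsig {((n:ℕ):ℤ)} ((n:ℕ):ℤ) (by simp) _ (hScomap n)
      refine le_trans h14 (le_csSup ⟨2, ?_⟩ hmemset)
      rintro r ⟨Γ, j, -, rfl⟩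
      exact alphaOf_le_two P _ _
  refine ⟨hmain, ?_, ?_⟩ <;> intro hT
  · obtain ⟨N, hN⟩ := eventually_atTop.1 (hT.eventually_lt_const (by norm_num : (0:ℝ) < 1/4))
    have h1 := hN (max N 1) (le_max_left _ _)
    have h2 := (hmain (max N 1) (le_max_right _ _)).1
    linarith
  · obtain ⟨N, hN⟩ := eventually_atTop.1 (hT.eventually_lt_const (by norm_num : (0:ℝ) < 1/4))
    have h1 := hN (max N 1) (le_max_left _ _)
    have h2 := (hmain (max N 1) (le_max_right _ _)).2
    linarith

end
end
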